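/- If g : V → ℝ is harmonic at x for the random walk on G (i.e. L g(x) = 0, equivalently g(x) = ∑_{y≠x} c_{xy} g(y) / ∑_{w≠x} c_{xw}), then for every z ≠ x, L g(z) = L_x g(z), where L_x is the generator of the random walk on the reduced graph G_x with conductances c̃_{yz} = c_{yz} + c_{xy}c_{xz}/∑_{w≠x} c_{xw}. -/

import Mathlib

open Finset

/-- If `g` is harmonic at `x` for the random walk on `G` (`L g x = 0`), then for every
`z ≠ x`, `L g z = L_x g z`, where `L_x` is the generator of the random walk on the
reduced graph `G_x` with conductances `c̃_{yz} = c_{yz} + c_{xy}c_{xz}/∑_{w≠x} c_{xw}`. -/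
theorem harmonic_reduction {V : Type*} [Fintype V] [DecidableEq V]
    (c : V → V → ℝ) (hsymm : ∀ y z, c y z = c z y) (hnonneg : ∀ y z, 0 ≤ c y z)
    (x : V) (hx : 0 < ∑ w ∈ univ.erase x, c x w)
    (g : V → ℝ)
    (hharm : ∑ y ∈ univ.erase x, c x y * (g y - g x) = 0)
    (z : V) (hz : z ≠ x) :
    ∑ y ∈ univ.erase z, c z y * (g y - g z) =
      ∑ y ∈ (univ.erase z).erase x,
        (c z y + c x z * c x y / ∑ w ∈ univ.erase x, c x w) * (g y - g z) := by
  set S := ∑ w ∈ univ.erase x, c x w with hSdef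
  have hS0 : S ≠ 0 := ne_of_gt hx
  have hmemx : x ∈ univ.erase z := Finset.mem_erase.2 ⟨Ne.symm hz, Finset.mem_univ x⟩
  have hkey : ∑ y ∈ (univ.erase z).erase x, c x y * (g y - g z) = S * (g x - g z) := by
    rw [Finset.erase_right_comm, Finset.sum_erase _ (by ring)]
    have h1 : ∑ y ∈ univ.erase x, c x y * (g y - g z)
        = (∑ y ∈ univ.erase x, c x y * (g y - g x)) + (g x - g z) * S := by
      rw [hSdef, Finset.mul_sum, ← Finset.sum_add_distrib]
      exact Finset.sum_congr rfl fun y _ => by ring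
    rw [h1, hharm]; ring
  rw [← Finset.add_sum_erase _ _ hmemx]
  have hrhs : ∑ y ∈ (univ.erase z).erase x,
      (c z y + c x z * c x y / S) * (g y - g z)
      = (∑ y ∈ (univ.erase z).erase x, c z y * (g y - g z))
        + (c x z / S) * ∑ y ∈ (univ.erase z).erase x, c x y * (g y - g z) := by
    rw [Finset.mul_sum, ← Finset.sum_add_distrib]
    exact Finset.sum_congr rfl fun y _ => by field_simp
  rw [hrhs, hkey, hsymm z x]
  field_simp
  ring
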